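/- Let V be a real vector space, S ⊆ V a convex set, and a₁, a₂, b ∈ V. If the segment [a₁, b] meets S and the segment [a₂, b] meets S, then for every point a ∈ [a₁, a₂] the segment [a, b] meets S. -/

import Mathlib

theorem segment_meets_convex_of_endpoints (V : Type*) [AddCommGroup V] [Module ℝ V]
    (S : Set V) (hS : Convex ℝ S) (a₁ a₂ b : V)
    (h₁ : (segment ℝ a₁ b ∩ S).Nonempty) (h₂ : (segment ℝ a₂ b ∩ S).Nonempty) :
    ∀ a ∈ segment ℝ a₁ a₂, (segment ℝ a b ∩ S).Nonempty := by
  obtain ⟨s₁, ⟨α, α', hα, hα', hαα', hs₁eq⟩, hs₁S⟩ := h₁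
  obtain ⟨s₂, ⟨β, β', hβ, hβ', hββ', hs₂eq⟩, hs₂S⟩ := h₂
  rintro a ⟨θ, θ', hθ, hθ', hθθ', rfl⟩
  rcases eq_or_lt_of_le hα with hα0 | hα0
  · -- α = 0, so s₁ = b ∈ S
    have hb : b ∈ S := by
      have : s₁ = b := by
        rw [← hs₁eq, ← hα0]
        have : α' = 1 := by linarith
        simp [this]
      rwa [this] at hs₁S
    exact ⟨b, right_mem_segment ℝ _ _, hb⟩
  rcases eq_or_lt_of_le hβ with hβ0 | hβ0
  · have hb : b ∈ S := by
      have : s₂ = b := by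
        rw [← hs₂eq, ← hβ0]
        have : β' = 1 := by linarith
        simp [this]
      rwa [this] at hs₂S
    exact ⟨b, right_mem_segment ℝ _ _, hb⟩
  set D : ℝ := θ * β + θ' * α with hD
  have hDpos : 0 < D := by
    rcases eq_or_lt_of_le hθ with hθ0 | hθ0
    · have : θ' = 1 := by linarith
      rw [hD, ← hθ0, this]; simpa using hα0
    · positivity
  refine ⟨(θ * β / D) • s₁ + (θ' * α / D) • s₂, ?_, hS hs₁S hs₂S (by positivity) (by positivity) ?_⟩
  · refine ⟨α * β / D, θ * β / D * α' + θ' * α / D * β', by positivity, by positivity, ?_, ?_⟩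
    · field_simp
      linear_combination θ * β * hαα' + θ' * α * hββ' - α * β * hθθ'
    · rw [← hs₁eq, ← hs₂eq]
      match_scalars <;> field_simp <;> ring
  · field_simp
    exact hD.symm
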